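/- arXiv:2009.02535 — 2 statements merged into one kernel-verified Lean document; each statement's English description precedes it below -/
import Mathlib

section
/- Structures that are simultaneously complexity-optimal (complexity 3n-6) and latency-optimal (latency ⌈log₂(n-1)⌉) exist if and only if n ∈ {3, 4, 6}; equivalently, for n ≥ 3, δ + ⌈log₂(n-2^δ)⌉ = ⌈log₂(n-1)⌉ with δ = ⌊log₂(n/2)⌋ iff n ∈ {3,4,6}. -/
private lemma clog_eq_succ {k x : ℕ} (h1 : 2 ^ k < x) (h2 : x ≤ 2 ^ (k + 1)) :
    Nat.clog 2 x = k + 1 :=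
  le_antisymm ((Nat.clog_le_iff_le_pow one_lt_two).2 h2)
    ((Nat.lt_clog_iff_pow_lt one_lt_two).2 h1)

private lemma log_eq {k x : ℕ} (h1 : 2 ^ k ≤ x) (h2 : x < 2 ^ (k + 1)) :
    Nat.log 2 x = k := by
  have hx : x ≠ 0 := by
    have := Nat.one_le_two_pow (n := k)
    omega
  have l1 : k ≤ Nat.log 2 x := (Nat.le_log_iff_pow_le one_lt_two hx).2 h1
  have l2 : Nat.log 2 x < k + 1 := by
    by_contra hc
    push_neg at hc
    exact absurd (le_trans (Nat.pow_le_pow_right (by norm_num) hc)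
      (Nat.pow_log_le_self 2 hx)) (not_le.2 h2)
  omega

/-- Structures that are simultaneously complexity-optimal and latency-optimal
exist iff `n ∈ {3, 4, 6}`: for integers `n ≥ 3`, setting `δ = ⌊log₂(n/2)⌋`,
one has `δ + ⌈log₂(n - 2^δ)⌉ = ⌈log₂(n-1)⌉` if and only if `n ∈ {3, 4, 6}`. -/
theorem co_lo_iff (n : ℕ) (hn : 3 ≤ n) :
    Nat.log 2 (n / 2) + Nat.clog 2 (n - 2 ^ Nat.log 2 (n / 2)) =
      Nat.clog 2 (n - 1) ↔ n = 3 ∨ n = 4 ∨ n = 6 := by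
  constructor
  · intro h
    have hn0 : n ≠ 0 := by omega
    obtain ⟨k, hk⟩ : ∃ k, Nat.log 2 n = k + 1 := by
      have h1 : 1 ≤ Nat.log 2 n :=
        (Nat.le_log_iff_pow_le one_lt_two hn0).2 (by norm_num; omega)
      exact ⟨Nat.log 2 n - 1, by omega⟩
    have hδ : Nat.log 2 (n / 2) = k := by
      rw [Nat.log_div_base, hk]
      omega
    have hlow : 2 ^ (k + 1) ≤ n := by
      have := Nat.pow_log_le_self 2 hn0
      rwa [hk] at this
    have hhigh : n < 2 ^ (k + 2) := by
      have := Nat.lt_pow_succ_log_self one_lt_two n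
      rwa [hk] at this
    rw [hδ] at h
    have hp1 : 1 ≤ 2 ^ k := Nat.one_le_two_pow
    have e1 : 2 ^ (k + 1) = 2 * 2 ^ k := by ring
    have e2 : 2 ^ (k + 2) = 4 * 2 ^ k := by ring
    rw [e1] at hlow
    rw [e2] at hhigh
    by_cases hA : n = 2 * 2 ^ k
    · -- n = 2^(k+1)
      have hk1 : 1 ≤ k := by
        rcases Nat.eq_zero_or_pos k with rfl | h' <;> simp_all <;> omega
      have hsub : n - 2 ^ k = 2 ^ k := by omega
      have hc1 : Nat.clog 2 (n - 2 ^ k) = k := by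
        rw [hsub, Nat.clog_pow 2 k one_lt_two]
      have hc2 : Nat.clog 2 (n - 1) = k + 1 := by
        apply clog_eq_succ
        · have : 2 ≤ 2 ^ k := by
            calc 2 = 2 ^ 1 := by norm_num
            _ ≤ 2 ^ k := Nat.pow_le_pow_right (by norm_num) hk1
          omega
        · rw [e1]; omega
      rw [hc1, hc2] at h
      have : k = 1 := by omega
      subst this
      right; left; omega
    · have hB : 2 * 2 ^ k < n := by omega
      by_cases hB1 : n = 2 * 2 ^ k + 1
      · have hc1 : Nat.clog 2 (n - 2 ^ k) = k + 1 := by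
          apply clog_eq_succ
          · omega
          · rw [e1]; omega
        have hc2 : Nat.clog 2 (n - 1) = k + 1 := by
          have : n - 1 = 2 ^ (k + 1) := by rw [e1]; omega
          rw [this, Nat.clog_pow 2 (k + 1) one_lt_two]
        rw [hc1, hc2] at h
        have : k = 0 := by omega
        subst this
        left; omega
      · have hc2 : Nat.clog 2 (n - 1) = k + 2 := by
          apply clog_eq_succ
          · rw [e1]; omega
          · rw [show 2 ^ (k + 2) = 4 * 2 ^ k from by ring]; omega
        by_cases hB2 : n ≤ 3 * 2 ^ k
        · have hc1 : Nat.clog 2 (n - 2 ^ k) = k + 1 := by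
            apply clog_eq_succ
            · omega
            · rw [e1]; omega
          rw [hc1, hc2] at h
          have : k = 1 := by omega
          subst this
          right; right; omega
        · have hc1 : Nat.clog 2 (n - 2 ^ k) = k + 2 := by
            apply clog_eq_succ
            · rw [e1]; omega
            · rw [show 2 ^ (k + 1 + 1) = 4 * 2 ^ k from by ring]; omega
          rw [hc1, hc2] at h
          have : k = 0 := by omega
          subst this
          simp at hB2 hhigh
          omega
  · rintro (rfl | rfl | rfl)
    · have h1 : Nat.log 2 (3 / 2) = 0 := by norm_num
      rw [h1]
      norm_num
    · have h1 : Nat.log 2 (4 / 2) = 1 := by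
        norm_num
      rw [h1]
      norm_num
    · have h1 : Nat.log 2 (6 / 2) = 1 := by
        norm_num
      rw [h1]
      norm_num
end

section
/- Let n = 2^k + 1 with k ≥ 1. Define a directed graph S on nodes v_{i,j} for 0 ≤ i ≤ k, j ∈ ℤ/nℤ, where v_{0,j} = x_j, and with edges (v_{i-1,j}, v_{i,j}) and (v_{i-1, j+2^{i-1} mod n}, v_{i,j}) for 1 ≤ i ≤ k. Then for each j, the in-subgraph of v_{k,j} is a perfect directed binary tree of height k whose leaf set is {x_1,...,x_n} \ {x_{j-1}} (indices mod n). -/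
/-- `IsDPath edge u v p` : the list of vertices `p` is a directed path (walk)
from `u` to `v` along `edge`. -/
def IsDPath {V : Type} (edge : V → V → Prop) (u v : V) (p : List V) : Prop :=
  List.Chain' edge p ∧ p.head? = some u ∧ p.getLast? = some v

lemma isDPath_to_rtg {V : Type} (e : V → V → Prop) :
    ∀ (p : List V) (u v : V), IsDPath e u v p → Relation.ReflTransGen e u v := by
  intro p
  induction p with
  | nil => intro u v h; simp [IsDPath] at h
  | cons a t ih =>
    intro u v h
    obtain ⟨hc, hh, hl⟩ := h
    simp only [List.head?_cons, Option.some.injEq] at hh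
    subst hh
    cases t with
    | nil =>
      simp only [List.getLast?_singleton, Option.some.injEq] at hl
      subst hl; rfl
    | cons b t' =>
      have he : e a b := (List.isChain_cons_cons.mp hc).1
      have := ih b v ⟨(List.isChain_cons_cons.mp hc).2, rfl, by simpa [List.getLast?_cons_cons] using hl⟩
      exact Relation.ReflTransGen.head he this

lemma rtg_to_isDPath {V : Type} (e : V → V → Prop) {u v : V}
    (h : Relation.ReflTransGen e u v) : ∃ p, IsDPath e u v p := by
  induction h with
  | refl => exact ⟨[u], List.isChain_singleton u, rfl, rfl⟩
  | @tail b c hbc hr ih =>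
    obtain ⟨p, hc, hh, hl⟩ := ih
    refine ⟨p ++ [c], ?_, ?_, by simp [List.getLast?_concat]⟩
    · refine List.isChain_append.mpr ⟨hc, List.isChain_singleton c, ?_⟩
      intro x hx y hy
      simp only [List.head?_cons, Option.mem_def, Option.some.injEq] at hy
      rw [hl] at hx
      simp only [Option.mem_def, Option.some.injEq] at hx
      subst hx; subst hy; exact hr
    · cases p with
      | nil => simp at hh
      | cons x t => simpa using hh

/-- The edge relation of Construction 2: nodes `v_{i,j}` for `0 ≤ i ≤ k`,
`j ∈ ℤ/nℤ` with `n = 2^k + 1`, and edges `(v_{i-1,j}, v_{i,j})` and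
`(v_{i-1, j+2^{i-1}}, v_{i,j})` for `1 ≤ i ≤ k`. -/
def consEdge (k : ℕ) :
    (Fin (k + 1) × ZMod (2 ^ k + 1)) → (Fin (k + 1) × ZMod (2 ^ k + 1)) → Prop :=
  fun u v => (u.1 : ℕ) + 1 = (v.1 : ℕ) ∧
    (u.2 = v.2 ∨ u.2 = v.2 + (2 : ZMod (2 ^ k + 1)) ^ (u.1 : ℕ))

lemma cast_inj' {n a b : ℕ} [NeZero n] (ha : a < n) (hb : b < n)
    (h : (a : ZMod n) = b) : a = b := by
  have h1 : ((a : ZMod n)).val = ((b : ZMod n)).val := by rw [h]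
  rwa [ZMod.val_cast_of_lt ha, ZMod.val_cast_of_lt hb] at h1

lemma main_lemma (k : ℕ) (j : ZMod (2 ^ k + 1)) :
    ∀ d i (hik : i + d = k) (m : ZMod (2 ^ k + 1)),
      (Relation.ReflTransGen (consEdge k) ((⟨i, by omega⟩ : Fin (k+1)), m) (Fin.last k, j) ↔
        ∃ s : ℕ, s < 2 ^ k ∧ 2 ^ i ∣ s ∧ m = j + (s : ZMod (2 ^ k + 1))) ∧
      (∀ p, IsDPath (consEdge k) ((⟨i, by omega⟩ : Fin (k+1)), m) (Fin.last k, j) p →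
        p.length = d + 1) ∧
      (∀ p q, IsDPath (consEdge k) ((⟨i, by omega⟩ : Fin (k+1)), m) (Fin.last k, j) p →
        IsDPath (consEdge k) ((⟨i, by omega⟩ : Fin (k+1)), m) (Fin.last k, j) q → p = q) := by
  intro d
  induction d with
  | zero =>
    intro i hik m
    have hi : i = k := by omega
    subst hi
    have hnode : ((⟨i, by omega⟩ : Fin (i+1)), m) = (Fin.last i, m) := by
      simp [Fin.last]
    rw [hnode]
    have noedge : ∀ c, ¬ consEdge i (Fin.last i, m) c := by
      rintro c ⟨h1, -⟩
      have := c.1.isLt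
      simp only [Fin.val_last] at h1
      omega
    have pathfact : ∀ p, IsDPath (consEdge i) (Fin.last i, m) (Fin.last i, j) p →
        p = [(Fin.last i, m)] ∧ m = j := by
      rintro p ⟨hc, hh, hl⟩
      cases p with
      | nil => simp at hh
      | cons x t =>
        simp only [List.head?_cons, Option.some.injEq] at hh
        subst hh
        cases t with
        | nil =>
          simp only [List.getLast?_singleton, Option.some.injEq, Prod.mk.injEq] at hl
          exact ⟨rfl, hl.2⟩
        | cons b t' =>
          exact absurd (List.isChain_cons_cons.mp hc).1 (noedge b)
    refine ⟨⟨?_, ?_⟩, ?_, ?_⟩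
    · intro h
      rcases Relation.ReflTransGen.cases_head h with heq | ⟨c, hac, -⟩
      · refine ⟨0, by positivity, dvd_zero _, ?_⟩
        have : m = j := by
          have := congrArg Prod.snd heq; simpa using this
        simp [this]
      · exact absurd hac (noedge c)
    · rintro ⟨s, hs, hdvd, rfl⟩
      have hs0 : s = 0 := Nat.eq_zero_of_dvd_of_lt hdvd hs
      subst hs0
      simp only [Nat.cast_zero, add_zero]
      exact Relation.ReflTransGen.refl
    · intro p hp
      rw [(pathfact p hp).1]
      rfl
    · intro p q hp hq
      rw [(pathfact p hp).1, (pathfact q hq).1]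
  | succ d ih =>
    intro i hik m
    have hilt : i < k := by omega
    have IH := ih (i+1) (by omega)
    have c2 : (2 : ZMod (2^k+1)) ^ i = ((2^i : ℕ) : ZMod (2^k+1)) := by push_cast; ring
    have key : ∀ s' : ℕ, s' < 2^k → 2^(i+1) ∣ s' → s' + 2^i < 2^k := by
      intro s' hs hd
      obtain ⟨r, rfl⟩ := hd
      have hk2 : 2^(i+1) * 2^(k-(i+1)) = 2^k := by
        rw [← pow_add]; congr 1; omega
      have hr : r < 2^(k-(i+1)) := by
        by_contra hcon
        push_neg at hcon
        have := Nat.mul_le_mul_left (2^(i+1)) hcon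
        omega
      have h1 : 2^(i+1) * (r+1) ≤ 2^k := by
        rw [← hk2]; exact Nat.mul_le_mul_left _ hr
      have h2 : 2^i < 2^(i+1) := Nat.pow_lt_pow_right one_lt_two (Nat.lt_succ_self i)
      have h3 : 2^(i+1) * (r+1) = 2^(i+1) * r + 2^(i+1) := by ring
      linarith
    have edge_iff : ∀ c, consEdge k ((⟨i, by omega⟩ : Fin (k+1)), m) c ↔
        (c = ((⟨i+1, by omega⟩ : Fin (k+1)), m) ∨
         c = ((⟨i+1, by omega⟩ : Fin (k+1)), m - ((2^i : ℕ) : ZMod (2^k+1)))) := by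
      intro c
      constructor
      · rintro ⟨h1, h2 | h2⟩
        · left
          rw [Prod.ext_iff]
          refine ⟨Fin.ext ?_, h2.symm⟩
          simpa using h1.symm
        · right
          rw [Prod.ext_iff]
          refine ⟨Fin.ext (by simpa using h1.symm), ?_⟩
          rw [eq_sub_iff_add_eq, ← c2]
          exact h2.symm
      · rintro (rfl | rfl)
        · exact ⟨rfl, Or.inl rfl⟩
        · refine ⟨rfl, Or.inr ?_⟩
          rw [c2]; ring
    have excl : ¬ ((∃ s : ℕ, s < 2^k ∧ 2^(i+1) ∣ s ∧ m = j + (s : ZMod (2^k+1))) ∧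
        (∃ s : ℕ, s < 2^k ∧ 2^(i+1) ∣ s ∧
          m - ((2^i : ℕ) : ZMod (2^k+1)) = j + (s : ZMod (2^k+1)))) := by
      rintro ⟨⟨s1, hs1, hd1, he1⟩, ⟨s2, hs2, hd2, he2⟩⟩
      have hlt : s2 + 2^i < 2^k := key s2 hs2 hd2
      have hcast : (s1 : ZMod (2^k+1)) = ((s2 + 2^i : ℕ) : ZMod (2^k+1)) := by
        push_cast
        have he2' : m = j + (s2 : ZMod (2^k+1)) + ((2^i : ℕ) : ZMod (2^k+1)) := by
          rw [← he2]; ring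
        rw [he2'] at he1
        push_cast at he1
        linear_combination -he1
      have heq : s1 = s2 + 2^i := cast_inj' (by omega) (by omega) hcast
      have hdd : 2^(i+1) ∣ 2^i := by
        have : 2^i = s1 - s2 := by omega
        rw [this]
        exact Nat.dvd_sub hd1 hd2
      have := Nat.le_of_dvd (by positivity) hdd
      have h2 : 2^i < 2^(i+1) := Nat.pow_lt_pow_right one_lt_two (Nat.lt_succ_self i)
      omega
    have shape : ∀ p, IsDPath (consEdge k) ((⟨i, by omega⟩ : Fin (k+1)), m) (Fin.last k, j) p →
        ∃ c t, p = ((⟨i, by omega⟩ : Fin (k+1)), m) :: c :: t ∧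
          consEdge k ((⟨i, by omega⟩ : Fin (k+1)), m) c ∧
          IsDPath (consEdge k) c (Fin.last k, j) (c :: t) := by
      rintro p ⟨hc, hh, hl⟩
      cases p with
      | nil => simp at hh
      | cons x t =>
        simp only [List.head?_cons, Option.some.injEq] at hh
        subst hh
        cases t with
        | nil =>
          simp only [List.getLast?_singleton, Option.some.injEq, Prod.mk.injEq] at hl
          have := congrArg Fin.val hl.1
          simp [Fin.last] at this
          omega
        | cons c t' =>
          exact ⟨c, t', rfl, (List.isChain_cons_cons.mp hc).1,
            (List.isChain_cons_cons.mp hc).2, rfl, by simpa [List.getLast?_cons_cons] using hl⟩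
    have numeq : (∃ s : ℕ, s < 2^k ∧ 2^i ∣ s ∧ m = j + (s : ZMod (2^k+1))) ↔
        ((∃ s : ℕ, s < 2^k ∧ 2^(i+1) ∣ s ∧ m = j + (s : ZMod (2^k+1))) ∨
         (∃ s : ℕ, s < 2^k ∧ 2^(i+1) ∣ s ∧
            m - ((2^i : ℕ) : ZMod (2^k+1)) = j + (s : ZMod (2^k+1)))) := by
      constructor
      · rintro ⟨s, hs, ⟨t, rfl⟩, he⟩
        rcases Nat.even_or_odd t with ⟨r, rfl⟩ | ⟨r, rfl⟩
        · left
          exact ⟨2^i * (r + r), hs, ⟨r, by ring⟩, he⟩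
        · right
          have hnn : 2^i * (2*r+1) = 2^(i+1)*r + 2^i := by ring
          have hpos : 0 < 2^i := Nat.pow_pos (by norm_num)
          refine ⟨2^(i+1) * r, by omega, ⟨r, rfl⟩, ?_⟩
          rw [hnn] at he
          rw [he]
          push_cast
          ring
      · rintro (⟨s, hs, hd, he⟩ | ⟨s, hs, hd, he⟩)
        · exact ⟨s, hs, dvd_trans (pow_dvd_pow 2 (Nat.le_succ i)) hd, he⟩
        · refine ⟨s + 2^i, key s hs hd, ?_, ?_⟩
          · obtain ⟨r, rfl⟩ := hd
            exact ⟨2*r + 1, by ring⟩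
          · rw [sub_eq_iff_eq_add] at he
            rw [he]
            push_cast
            ring
    refine ⟨?_, ?_, ?_⟩
    · rw [numeq]
      constructor
      · intro h
        rcases Relation.ReflTransGen.cases_head h with heq | ⟨c, hac, hcr⟩
        · exfalso
          have := congrArg (fun z => ((Prod.fst z : Fin (k+1)) : ℕ)) heq
          simp [Fin.last] at this
          omega
        · rcases (edge_iff c).mp hac with rfl | rfl
          · exact Or.inl ((IH m).1.mp hcr)
          · exact Or.inr ((IH _).1.mp hcr)
      · rintro (hA | hB)
        · exact Relation.ReflTransGen.head ((edge_iff _).mpr (Or.inl rfl)) ((IH m).1.mpr hA)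
        · exact Relation.ReflTransGen.head ((edge_iff _).mpr (Or.inr rfl)) ((IH _).1.mpr hB)
    · intro p hp
      obtain ⟨c, t, rfl, he, hpath⟩ := shape p hp
      rcases (edge_iff c).mp he with rfl | rfl
      · have := (IH m).2.1 _ hpath
        simp only [List.length_cons] at this ⊢
        omega
      · have := (IH _).2.1 _ hpath
        simp only [List.length_cons] at this ⊢
        omega
    · intro p q hp hq
      obtain ⟨c, t, rfl, he1, hp1⟩ := shape p hp
      obtain ⟨c', t', rfl, he2, hp2⟩ := shape q hq
      have hmain : c :: t = c' :: t' := by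
        rcases (edge_iff c).mp he1 with rfl | rfl <;>
          rcases (edge_iff c').mp he2 with rfl | rfl
        · exact (IH m).2.2 _ _ hp1 hp2
        · exact absurd ⟨(IH m).1.mp (isDPath_to_rtg _ _ _ _ hp1),
            (IH _).1.mp (isDPath_to_rtg _ _ _ _ hp2)⟩ excl
        · exact absurd ⟨(IH m).1.mp (isDPath_to_rtg _ _ _ _ hp2),
            (IH _).1.mp (isDPath_to_rtg _ _ _ _ hp1)⟩ excl
        · exact (IH _).2.2 _ _ hp1 hp2
      rw [hmain]

/-- For `n = 2^k + 1` with `k ≥ 1`, in the graph of Construction 2, the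
in-subgraph of each `v_{k,j}` is a perfect directed binary tree of height `k`
whose leaf set is `{x_1, …, x_n} \ {x_{j-1}}` (indices mod `n`): the level-0
nodes `(0, m)` reaching `(k, j)` are exactly those with `m ≠ j - 1`, from every
node reaching `(k, j)` there is a unique directed path to `(k, j)` (so the
in-subgraph is a tree), and every path from a level-0 node to `(k, j)` has
exactly `k` edges (all leaves are at depth `k`). -/
theorem construction_perfect_tree (k : ℕ) (hk : 1 ≤ k) (j : ZMod (2 ^ k + 1)) :
    (∀ m : ZMod (2 ^ k + 1),
      Relation.ReflTransGen (consEdge k) ((0 : Fin (k + 1)), m) (Fin.last k, j) ↔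
        m ≠ j - 1) ∧
    (∀ u, Relation.ReflTransGen (consEdge k) u (Fin.last k, j) →
      ∃! p : List (Fin (k + 1) × ZMod (2 ^ k + 1)),
        IsDPath (consEdge k) u (Fin.last k, j) p) ∧
    (∀ (m : ZMod (2 ^ k + 1)) (p : List (Fin (k + 1) × ZMod (2 ^ k + 1))),
      IsDPath (consEdge k) ((0 : Fin (k + 1)), m) (Fin.last k, j) p →
        p.length = k + 1) := by
  have M := main_lemma k j
  have h00 : (0 : Fin (k + 1)) = (⟨0, by omega⟩ : Fin (k+1)) := by
    ext; simp
  have hneg : ((2^k : ℕ) : ZMod (2^k+1)) = -1 := by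
    have h : ((2^k + 1 : ℕ) : ZMod (2^k+1)) = 0 := ZMod.natCast_self _
    push_cast at h ⊢
    linear_combination h
  refine ⟨?_, ?_, ?_⟩
  · intro m
    rw [h00, (M k 0 (by omega) m).1]
    constructor
    · rintro ⟨s, hs, -, rfl⟩ hcon
      have h1 : (s : ZMod (2^k+1)) = -1 := by linear_combination hcon
      rw [← hneg] at h1
      have := cast_inj' (by omega) (by omega) h1
      omega
    · intro hne
      have hvlt : (m - j).val < 2^k + 1 := ZMod.val_lt _
      have hmv : (((m - j).val : ℕ) : ZMod (2^k+1)) = m - j := ZMod.natCast_rightInverse _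
      have hv2 : (m - j).val ≠ 2^k := by
        intro hcon
        apply hne
        have h2 : m - j = -1 := by rw [← hmv, hcon, hneg]
        linear_combination h2
      refine ⟨(m - j).val, by omega, by simp, ?_⟩
      rw [hmv]
      ring
  · rintro ⟨⟨iv, hiv⟩, mv⟩ hu
    obtain ⟨p, hp⟩ := rtg_to_isDPath _ hu
    refine ⟨p, hp, fun q hq => ?_⟩
    exact (M (k - iv) iv (by omega) mv).2.2 q p hq hp
  · intro m p hp
    rw [h00] at hp
    exact (M k 0 (by omega) m).2.1 p hp
end
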